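/- Fix d even, 0 < ε < 1, and t ≥ 1. For z ∈ {±1}^{d/2} define g^z : [d] → ℝ by g^z(x) = ε·(-1)^x·z_{⌈x/2⌉}. Then for every sequence x₁,…,x_{t-1} ∈ [d], E_{z ~ uniform on {±1}^{d/2}}[∏_{i=1}^{t-1}(1 + g^z(x_i))] ≥ (1 - ε²)^{(t-1)/2}. -/

import Mathlib

/-- The `±1` value of coordinate `⌈x/2⌉` (1-based index `j`) of a sign vector encoded by
`s : Fin m → Bool`. -/
def pmSign (m : ℕ) (s : Fin m → Bool) (j : ℕ) : ℝ :=
  if h : j - 1 < m then (if s ⟨j - 1, h⟩ then 1 else -1) else 1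

/-- For every fixed transcript `x₁,…,x_{t-1} ∈ [d]`,
`E_{z ~ {±1}^{d/2}}[∏_{i<t}(1 + g^z(x_i))] ≥ (1-ε²)^{(t-1)/2}`,
where `g^z(x) = ε·(-1)^x·z_{⌈x/2⌉}`. -/
theorem stmt4 (d t : ℕ) (hd : 2 ∣ d) (hd0 : 0 < d) (ht : 1 ≤ t)
    (ε : ℝ) (hε0 : 0 < ε) (hε1 : ε < 1) (x : ℕ → ℕ) (hx : ∀ i, x i ∈ Finset.Icc 1 d) :
    (∑ s : Fin (d / 2) → Bool, ∏ i ∈ Finset.range (t - 1),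
        (1 + ε * (-1) ^ (x i) * pmSign (d / 2) s ((x i + 1) / 2))) / 2 ^ (d / 2)
      ≥ (1 - ε ^ 2) ^ (((t : ℝ) - 1) / 2) := by
  set m := d / 2 with hm
  have hidx : ∀ i, (x i + 1) / 2 - 1 < m := by
    intro i
    have := hx i
    rw [Finset.mem_Icc] at this
    omega
  set P : (Fin m → Bool) → ℝ := fun s => ∏ i ∈ Finset.range (t - 1),
      (1 + ε * (-1) ^ (x i) * pmSign m s ((x i + 1) / 2)) with hP
  have hsign : ∀ (s : Fin m → Bool) i, pmSign m s ((x i + 1) / 2) = 1 ∨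
      pmSign m s ((x i + 1) / 2) = -1 := by
    intro s i
    unfold pmSign
    rw [dif_pos (hidx i)]
    by_cases h : s ⟨_, hidx i⟩ <;> simp [h]
  have hsq : ∀ (s : Fin m → Bool) i, (ε * (-1) ^ (x i) * pmSign m s ((x i + 1) / 2)) ^ 2 = ε ^ 2 := by
    intro s i
    rcases hsign s i with h | h <;> rcases Nat.even_or_odd (x i) with he | he <;>
      simp [h, he.neg_one_pow, Odd.neg_one_pow]
  have hterm_pos : ∀ (s : Fin m → Bool) i, 0 < 1 + ε * (-1) ^ (x i) * pmSign m s ((x i + 1) / 2) := by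
    intro s i
    have := hsq s i
    nlinarith [sq_nonneg (ε * (-1) ^ (x i) * pmSign m s ((x i + 1) / 2))]
  have hPpos : ∀ s, 0 < P s := fun s => Finset.prod_pos (fun i _ => hterm_pos s i)
  have hnegsign : ∀ (s : Fin m → Bool) i,
      pmSign m (fun j => ! s j) ((x i + 1) / 2) = - pmSign m s ((x i + 1) / 2) := by
    intro s i
    unfold pmSign
    rw [dif_pos (hidx i), dif_pos (hidx i)]
    by_cases h : s ⟨_, hidx i⟩ <;> simp [h]
  have hε2 : 0 < 1 - ε ^ 2 := by nlinarith
  have hprod : ∀ s, P s * P (fun j => ! s j) = (1 - ε ^ 2) ^ (t - 1) := by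
    intro s
    rw [hP]
    simp only
    rw [← Finset.prod_mul_distrib]
    rw [Finset.prod_congr rfl (g := fun _ => 1 - ε ^ 2) (fun i _ => by
      rw [hnegsign s i]
      linear_combination - hsq s i)]
    simp
  have hsqrt : Real.sqrt ((1 - ε ^ 2) ^ (t - 1)) = (1 - ε ^ 2) ^ (((t : ℝ) - 1) / 2) := by
    rw [Real.sqrt_eq_rpow, ← Real.rpow_natCast (1 - ε ^ 2) (t - 1),
      ← Real.rpow_mul hε2.le]
    congr 1
    rw [Nat.cast_sub ht]
    push_cast
    ring
  have hamgm : ∀ s : Fin m → Bool, 2 * (1 - ε ^ 2) ^ (((t : ℝ) - 1) / 2) ≤ P s + P (fun j => ! s j) := by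
    intro s
    have h1 : Real.sqrt (P s * P (fun j => ! s j)) ≤ (P s + P (fun j => ! s j)) / 2 := by
      have h2 : ((P s + P (fun j => ! s j)) / 2) = Real.sqrt (((P s + P (fun j => ! s j)) / 2) ^ 2) :=
        (Real.sqrt_sq (by have := hPpos s; have := hPpos (fun j => ! s j); positivity)).symm
      rw [h2]
      apply Real.sqrt_le_sqrt
      nlinarith [sq_nonneg (P s - P (fun j => ! s j))]
    rw [hprod s, hsqrt] at h1
    linarith
  -- sum over negation
  have hinv : Function.Involutive (fun (s : Fin m → Bool) (j : Fin m) => ! s j) := by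
    intro s; funext j; simp
  have hsum_neg : ∑ s : Fin m → Bool, P (fun j => ! s j) = ∑ s : Fin m → Bool, P s :=
    Equiv.sum_comp hinv.toPerm P
  have hcard : (Finset.univ : Finset (Fin m → Bool)).card = 2 ^ m := by
    simp
  have hsum : (2 : ℝ) ^ m * (2 * (1 - ε ^ 2) ^ (((t : ℝ) - 1) / 2)) ≤
      ∑ s : Fin m → Bool, (P s + P (fun j => ! s j)) := by
    calc (2 : ℝ) ^ m * (2 * (1 - ε ^ 2) ^ (((t : ℝ) - 1) / 2))
        = ∑ _s : Fin m → Bool, 2 * (1 - ε ^ 2) ^ (((t : ℝ) - 1) / 2) := by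
          rw [Finset.sum_const, hcard, nsmul_eq_mul]; push_cast; ring
      _ ≤ _ := Finset.sum_le_sum (fun s _ => hamgm s)
  rw [Finset.sum_add_distrib, hsum_neg] at hsum
  rw [ge_iff_le, le_div_iff₀ (by positivity)]
  show (1 - ε ^ 2) ^ (((t : ℝ) - 1) / 2) * 2 ^ m ≤ ∑ s : Fin m → Bool, P s
  linarith
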